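/- Let P be a lattice path with unit East and North steps that begins with an East step followed by a North step and ends with an East step followed by a North step. Then the number of lattice paths from the start point to the end point of P lying weakly below P equals Σ_{P' weakly below P} cc(P'), where cc(P') is the number of corners (an East step immediately followed by a North step) that P' has in common with P. -/

import Mathlib

/-! Lattice paths with unit East and North steps, encoded as `List Bool`
where `false` is an East step and `true` is a North step, read from the
starting (Southwest) point. -/

/-- `heightsAux p k` lists, for each East step of `p`, the number of North
steps preceding it, starting from initial height `k`. -/
def heightsAux : List Bool → ℕ → List ℕ
  | [], _ => []
  | false :: rest, k => k :: heightsAux rest k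
  | true :: rest, k => heightsAux rest (k + 1)

/-- The list of heights at which the successive East steps of `p` occur. -/
def heights (p : List Bool) : List ℕ := heightsAux p 0

/-- Number of East steps. -/
def countE (p : List Bool) : ℕ := p.count false

/-- Number of North steps. -/
def countN (p : List Bool) : ℕ := p.count true

/-- `p` is weakly below `q`: same endpoints, and each East step of `p` occurs
at a height not exceeding that of the corresponding East step of `q`. -/
def WeaklyBelow (p q : List Bool) : Prop :=
  countE p = countE q ∧ countN p = countN q ∧
    List.Forall₂ (· ≤ ·) (heights p) (heights q)

/-- The path `p` has a corner (an East step immediately followed by a North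
step) at its `i`-th East step (0-based). -/
def PathCorner (p : List Bool) (i : ℕ) : Prop :=
  (i + 1 = (heights p).length ∧ (heights p).getD i 0 < countN p) ∨
  (i + 1 < (heights p).length ∧ (heights p).getD i 0 < (heights p).getD (i + 1) 0)

/-- `p` and `q` have a common corner at their `i`-th East step: both have a
corner there and these corners are at the same location in the plane. -/
def CommonCorner (q p : List Bool) (i : ℕ) : Prop :=
  PathCorner p i ∧ PathCorner q i ∧ (heights p).getD i 0 = (heights q).getD i 0

/-- `cc q p` is the number of corners that `p` and `q` have in common. -/
noncomputable def cc (p q : List Bool) : ℕ :=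
  Set.ncard {i : ℕ | CommonCorner q p i}

/-! ### Auxiliary development -/

section Aux

set_option linter.unusedTactic false
set_option linter.unreachableTactic false
set_option linter.unnecessarySeqFocus false

/-- All weakly increasing sequences `g` with entries at least `c` that are
pointwise dominated by `h`. -/
def below : ℕ → List ℕ → List (List ℕ)
  | _, [] => [[]]
  | c, a :: h =>
    if _hca : c ≤ a then (below c h).map (c :: ·) ++ below (c+1) (a :: h) else []
  termination_by c h => (h.length, (h.headD 0) + 1 - c)
  decreasing_by
  · exact Prod.Lex.left _ _ (by simp)
  · exact Prod.Lex.right _ (by simp; omega)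

lemma below_nil (c : ℕ) : below c [] = [[]] := by rw [below]
lemma below_cons_le {c a : ℕ} (h : List ℕ) (hca : c ≤ a) :
    below c (a :: h) = (below c h).map (c :: ·) ++ below (c+1) (a :: h) := by
  rw [below]; simp [hca]
lemma below_cons_gt {c a : ℕ} (h : List ℕ) (hca : a < c) : below c (a :: h) = [] := by
  rw [below]; simp [Nat.not_le.mpr hca]

lemma chain_weaken {l : List ℕ} {k k' : ℕ} (hkk : k ≤ k')
    (hl : List.Chain (· ≤ ·) k' l) : List.Chain (· ≤ ·) k l := by
  cases l with
  | nil => exact .nil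
  | cons x t => simp only [List.Chain, List.chain_cons] at hl ⊢; exact ⟨le_trans hkk hl.1, hl.2⟩

lemma mem_below : ∀ (c : ℕ) (h : List ℕ) (g : List ℕ),
    g ∈ below c h ↔ List.Chain (· ≤ ·) c g ∧ List.Forall₂ (· ≤ ·) g h := by
  intro c h
  induction c, h using below.induct with
  | case1 c =>
    intro g
    rw [below_nil]
    constructor
    · rintro h; simp at h; simp [h]; exact .nil
    · rintro ⟨-, h2⟩; cases h2; simp
  | case2 c a h hca ih1 ih2 =>
    intro g
    rw [below_cons_le h hca]
    simp only [List.mem_append, List.mem_map]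
    constructor
    · rintro (⟨g', hg', rfl⟩ | hg)
      · obtain ⟨h1, h2⟩ := (ih1 g').mp hg'
        exact ⟨List.Chain.cons le_rfl h1, List.Forall₂.cons hca h2⟩
      · obtain ⟨h1, h2⟩ := (ih2 g).mp hg
        exact ⟨chain_weaken (Nat.le_succ c) h1, h2⟩
    · rintro ⟨h1, h2⟩
      rcases List.forall₂_cons_right_iff.mp h2 with ⟨v, g', hva, hg'h, rfl⟩
      simp only [List.Chain, List.chain_cons] at h1
      rcases eq_or_lt_of_le h1.1 with rfl | hlt
      · exact Or.inl ⟨g', (ih1 g').mpr ⟨h1.2, hg'h⟩, rfl⟩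
      · refine Or.inr ((ih2 _).mpr ⟨?_, h2⟩)
        simp only [List.Chain, List.chain_cons]; exact ⟨hlt, h1.2⟩
  | case3 c a h hca =>
    intro g
    rw [below_cons_gt h (Nat.not_le.mp hca)]
    simp only [List.not_mem_nil, false_iff]
    rintro ⟨h1, h2⟩
    rcases List.forall₂_cons_right_iff.mp h2 with ⟨v, g', hva, -, rfl⟩
    simp only [List.Chain, List.chain_cons] at h1
    omega

lemma nodup_below : ∀ (c : ℕ) (h : List ℕ), (below c h).Nodup := by
  intro c h
  induction c, h using below.induct with
  | case1 c => rw [below_nil]; simp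
  | case2 c a h hca ih1 ih2 =>
    rw [below_cons_le h hca]
    refine List.Nodup.append (ih1.map (fun x y => by simp)) ih2 ?_
    rintro g hg1 hg2
    simp only [List.mem_map] at hg1
    obtain ⟨g', -, rfl⟩ := hg1
    have := ((mem_below _ _ _).mp hg2).1
    simp only [List.Chain, List.chain_cons] at this
    omega
  | case3 c a h hca => rw [below_cons_gt h (Nat.not_le.mp hca)]; simp

/-- Recursive count of common corners of two height sequences, with `n` the
total number of North steps. -/
def ccN : List ℕ → List ℕ → ℕ → ℕ
  | v :: g, a :: h, n =>
      (if v = a ∧ a < h.headD n ∧ v < g.headD n then 1 else 0) + ccN g h n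
  | _, _, _ => 0

lemma ccN_nil_left (h : List ℕ) (n : ℕ) : ccN [] h n = 0 := by cases h <;> rfl

lemma head_gt_of_mem {c n : ℕ} {h g : List ℕ} (hcn : c < n)
    (hg : g ∈ below (c+1) h) : c < g.headD n := by
  have := (mem_below _ _ _).mp hg
  cases g with
  | nil => rw [List.headD_nil]; exact hcn
  | cons v g' =>
    have h1 := this.1; simp only [List.Chain, List.chain_cons] at h1
    rw [List.headD_cons]; omega

lemma countP_head_gt (n : ℕ) : ∀ (h : List ℕ) (c : ℕ), c < n →
    (below c h).countP (fun g => decide (c < g.headD n)) = (below (c+1) h).length := by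
  intro h c hcn
  cases h with
  | nil => rw [below_nil, below_nil]; simp [hcn]
  | cons a t =>
    rcases le_or_gt c a with hca | hca
    · rw [below_cons_le t hca, List.countP_append]
      have h1 : (List.map (c :: ·) (below c t)).countP
          (fun g => decide (c < g.headD n)) = 0 := by
        rw [List.countP_eq_zero]
        rintro g hg
        simp only [List.mem_map] at hg
        obtain ⟨g', -, rfl⟩ := hg
        simp [List.headD_cons]
      have h2 : (below (c+1) (a :: t)).countP (fun g => decide (c < g.headD n)) =
          (below (c+1) (a :: t)).length := by
        rw [List.countP_eq_length]
        intro g hg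
        simpa using head_gt_of_mem hcn hg
      omega
    · rw [below_cons_gt t hca, below_cons_gt t (by omega)]; simp

lemma countP_head_eq_cons {c a : ℕ} (h : List ℕ) (n : ℕ) (hca : c ≤ a) (hcn : c < n) :
    (below c (a :: h)).countP (fun g => decide (g.headD n = c)) = (below c h).length := by
  rw [below_cons_le h hca, List.countP_append]
  have h1 : (List.map (c :: ·) (below c h)).countP
      (fun g => decide (g.headD n = c)) = (List.map (c :: ·) (below c h)).length := by
    rw [List.countP_eq_length]
    rintro g hg
    simp only [List.mem_map] at hg
    obtain ⟨g', -, rfl⟩ := hg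
    simp
  have h2 : (below (c+1) (a :: h)).countP (fun g => decide (g.headD n = c)) = 0 := by
    rw [List.countP_eq_zero]
    intro g hg
    have := head_gt_of_mem hcn hg
    simp only [decide_eq_true_eq]
    omega
  rw [h1, h2, List.length_map]
  omega

lemma length_below_split (n : ℕ) : ∀ (h : List ℕ) (c : ℕ), c < n →
    (below c h).length =
      (below c h).countP (fun g => decide (g.headD n = c)) + (below (c+1) h).length := by
  intro h c hcn
  cases h with
  | nil => rw [below_nil, below_nil]; simp [Nat.ne_of_gt hcn]
  | cons a t =>
    rcases le_or_gt c a with hca | hca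
    · rw [countP_head_eq_cons t n hca hcn, below_cons_le t hca]
      simp
    · rw [below_cons_gt t hca, below_cons_gt t (by omega)]; simp

lemma sum_ite_countP {α : Type} (l : List α) (p : α → Prop) [DecidablePred p] :
    (l.map (fun a => if p a then 1 else 0)).sum = l.countP (fun a => decide (p a)) := by
  induction l with
  | nil => simp
  | cons x t ih => by_cases hx : p x <;> simp [List.countP_cons, hx, ih] <;> omega

/-- The key identity. -/
lemma key (n : ℕ) : ∀ (c : ℕ) (h : List ℕ), (h = [] → c < n) → (∀ x ∈ h, x < n) →
    ((below c h).map (fun g => ccN g h n)).sum =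
      (below c h).countP (fun g => decide (g.headD n = c)) := by
  intro c h
  induction c, h using below.induct with
  | case1 c =>
    intro hc _
    rw [below_nil]
    simp only [List.map_cons, List.map_nil, ccN_nil_left, List.sum_cons, List.sum_nil,
      List.countP_cons, List.countP_nil, List.headD_nil]
    have : ¬ ((n : ℕ) = c) := by have := hc rfl; omega
    simp [this]
  | case2 c a h hca ih1 ih2 =>
    intro _ hlt
    have han : a < n := hlt a (by simp)
    have hcn : c < n := lt_of_le_of_lt hca han
    have hlt' : ∀ x ∈ h, x < n := fun x hx => hlt x (by simp [hx])
    rw [countP_head_eq_cons h n hca hcn]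
    rw [below_cons_le h hca, List.map_append, List.sum_append, List.map_map]
    have hmap : ((below c h).map ((fun g => ccN g (a :: h) n) ∘ (c :: ·))).sum =
        ((below c h).map (fun g' =>
          (if c = a ∧ a < h.headD n ∧ c < g'.headD n then 1 else 0) + ccN g' h n)).sum := by
      rfl
    rw [hmap]
    have hsplit : ((below c h).map (fun g' =>
          (if c = a ∧ a < h.headD n ∧ c < g'.headD n then 1 else 0) + ccN g' h n)).sum =
        ((below c h).map (fun g' =>
          (if c = a ∧ a < h.headD n ∧ c < g'.headD n then 1 else 0))).sum +
        ((below c h).map (fun g' => ccN g' h n)).sum := by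
      induction below c h with
      | nil => simp
      | cons x t iht => simp at iht ⊢; omega
    rw [hsplit, ih1 (fun _ => hcn) hlt', ih2 (by simp) hlt]
    have hI : ((below c h).map (fun g' =>
          (if c = a ∧ a < h.headD n ∧ c < g'.headD n then 1 else 0))).sum =
        if c = a ∧ a < h.headD n then (below (c+1) h).length else 0 := by
      by_cases hc : c = a ∧ a < h.headD n
      · rw [if_pos hc]
        have : ∀ g' : List ℕ, (c = a ∧ a < h.headD n ∧ c < g'.headD n) ↔ (c < g'.headD n) := by
          tauto
        calc ((below c h).map (fun g' =>
              (if c = a ∧ a < h.headD n ∧ c < g'.headD n then 1 else 0))).sum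
            = ((below c h).map (fun g' => (if c < g'.headD n then 1 else 0))).sum := by
              congr 1; exact List.map_congr_left (fun g' _ => by rw [if_congr (this g') rfl rfl])
          _ = (below c h).countP (fun g => decide (c < g.headD n)) := sum_ite_countP _ _
          _ = (below (c+1) h).length := countP_head_gt n h c hcn
      · rw [if_neg hc]
        have : ∀ g' ∈ below c h,
            (if c = a ∧ a < h.headD n ∧ c < g'.headD n then 1 else 0) = 0 := by
          intro g' _; rw [if_neg]; tauto
        calc ((below c h).map (fun g' =>
              (if c = a ∧ a < h.headD n ∧ c < g'.headD n then 1 else 0))).sum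
            = ((below c h).map (fun _ => 0)).sum := by
              congr 1; exact List.map_congr_left this
          _ = 0 := by simp
    rw [hI]
    have hZ := length_below_split n h c hcn
    have hJ : (below (c+1) (a :: h)).countP (fun g => decide (g.headD n = c + 1)) =
        if c + 1 ≤ a then (below (c+1) h).length else 0 := by
      rcases le_or_gt (c+1) a with hc1 | hc1
      · rw [if_pos hc1]; exact countP_head_eq_cons h n hc1 (by omega)
      · rw [if_neg (by omega), below_cons_gt h hc1]; simp
    rw [hJ]
    rcases lt_or_eq_of_le hca with hlt2 | rfl
    · split_ifs with h1 h2 <;> omega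
    · rcases Nat.lt_or_ge c (h.headD n) with hh | hh
      · split_ifs with h1 h2 <;> omega
      · have hX : (below (c+1) h).length = 0 := by
          cases h with
          | nil => rw [List.headD_nil] at hh; omega
          | cons b t =>
            rw [List.headD_cons] at hh
            rw [below_cons_gt t (by omega)]
            simp
        split_ifs with h1 h2 <;> omega
  | case3 c a h hca =>
    intro _ _
    rw [below_cons_gt h (Nat.not_le.mp hca)]; simp

lemma chain_le_mem : ∀ {l : List ℕ} {k x : ℕ}, List.Chain (· ≤ ·) k l → x ∈ l → k ≤ x := by
  intro l
  induction l with
  | nil => intro k x _ hx; simp at hx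
  | cons y t ih =>
    intro k x hch hx
    simp only [List.Chain, List.chain_cons] at hch
    rcases List.mem_cons.mp hx with rfl | hx
    · exact hch.1
    · exact le_trans hch.1 (ih hch.2 hx)

lemma heightsAux_length (p : List Bool) : ∀ k, (heightsAux p k).length = countE p := by
  induction p with
  | nil => simp [heightsAux, countE]
  | cons b r ih =>
    intro k
    cases b <;> simp [heightsAux, countE, List.count_cons, ih k, ih (k+1)]

lemma chain_heightsAux (p : List Bool) : ∀ k, List.Chain (· ≤ ·) k (heightsAux p k) := by
  induction p with
  | nil => intro k; exact .nil
  | cons b r ih =>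
    intro k
    cases b
    · rw [heightsAux]; simp only [List.Chain, List.chain_cons]; exact ⟨le_rfl, ih k⟩
    · rw [heightsAux]; exact chain_weaken (Nat.le_succ k) (ih (k+1))

lemma mem_heightsAux_le (p : List Bool) : ∀ k x, x ∈ heightsAux p k → x ≤ k + countN p := by
  induction p with
  | nil => intro k x hx; simp [heightsAux] at hx
  | cons b r ih =>
    intro k x hx
    cases b
    · rw [heightsAux] at hx
      rcases List.mem_cons.mp hx with rfl | hx
      · simp
      · have := ih k x hx; simp [countN, List.count_cons] at *; omega
    · rw [heightsAux] at hx
      have := ih (k+1) x hx; simp [countN, List.count_cons] at *; omega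

lemma heightsAux_append_true (p : List Bool) :
    ∀ k, heightsAux (p ++ [true]) k = heightsAux p k := by
  induction p with
  | nil => intro k; rfl
  | cons b r ih => intro k; cases b <;> simp [heightsAux, ih]

/-- Reconstruct a path from its height sequence, initial height `k` and total
North count `n`. -/
def ofH : List ℕ → ℕ → ℕ → List Bool
  | [], k, n => List.replicate (n - k) true
  | v :: g, k, n => List.replicate (v - k) true ++ false :: ofH g v n

lemma ofH_shift {g : List ℕ} {k n : ℕ} (hk : ∀ x ∈ g, k + 1 ≤ x) (hn : k < n) :
    ofH g k n = true :: ofH g (k+1) n := by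
  cases g with
  | nil =>
    rw [ofH, ofH]
    have : n - k = (n - (k+1)) + 1 := by omega
    rw [this, List.replicate_succ]
  | cons v g' =>
    have hv : k + 1 ≤ v := hk v (by simp)
    rw [ofH, ofH]
    have : v - k = (v - (k+1)) + 1 := by omega
    rw [this, List.replicate_succ]
    simp

lemma ofH_heightsAux (p : List Bool) : ∀ k, ofH (heightsAux p k) k (k + countN p) = p := by
  induction p with
  | nil => intro k; rw [heightsAux, ofH]; simp [countN]
  | cons b r ih =>
    intro k
    cases b
    · rw [heightsAux, ofH]
      have : countN (false :: r) = countN r := by simp [countN, List.count_cons]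
      rw [this]
      simp [ih k]
    · rw [heightsAux]
      have hcn : countN (true :: r) = countN r + 1 := by simp [countN, List.count_cons]
      rw [hcn]
      have heq : k + (countN r + 1) = (k+1) + countN r := by omega
      rw [heq]
      rw [ofH_shift (fun x hx => chain_le_mem (chain_heightsAux r (k+1)) hx) (by omega)]
      rw [ih (k+1)]

lemma heightsAux_replicate_true (j : ℕ) : ∀ k (q : List Bool),
    heightsAux (List.replicate j true ++ q) k = heightsAux q (k + j) := by
  induction j with
  | zero => intro k q; simp
  | succ m ih =>
    intro k q
    rw [List.replicate_succ]
    simp only [List.cons_append]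
    rw [heightsAux, ih]
    congr 1
    omega

lemma heightsAux_ofH : ∀ (g : List ℕ) (k n : ℕ), List.Chain (· ≤ ·) k g →
    heightsAux (ofH g k n) k = g := by
  intro g
  induction g with
  | nil =>
    intro k n _
    rw [ofH]
    have := heightsAux_replicate_true (n - k) k []
    simpa [heightsAux] using this
  | cons v g' ih =>
    intro k n hch
    simp only [List.Chain, List.chain_cons] at hch
    rw [ofH, heightsAux_replicate_true]
    have : k + (v - k) = v := by omega
    rw [this, heightsAux]
    rw [ih v n hch.2]

lemma countN_ofH : ∀ (g : List ℕ) (k n : ℕ), List.Chain (· ≤ ·) k g →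
    (∀ x ∈ g, x ≤ n) → k ≤ n → countN (ofH g k n) = n - k := by
  intro g
  induction g with
  | nil => intro k n _ _ _; rw [ofH]; simp [countN]
  | cons v g' ih =>
    intro k n hch hle hkn
    simp only [List.Chain, List.chain_cons] at hch
    rw [ofH]
    have hv : v ≤ n := hle v (by simp)
    have : countN (List.replicate (v - k) true ++ false :: ofH g' v n) =
        (v - k) + countN (ofH g' v n) := by
      simp [countN, List.count_append, List.count_cons, List.count_replicate]
    rw [this, ih v n hch.2 (fun x hx => hle x (by simp [hx])) hv]
    omega

lemma countE_ofH : ∀ (g : List ℕ) (k n : ℕ), countE (ofH g k n) = g.length := by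
  intro g
  induction g with
  | nil => intro k n; rw [ofH]; simp [countE, List.count_replicate]
  | cons v g' ih =>
    intro k n
    rw [ofH]
    simp [countE, List.count_append, List.count_cons, List.count_replicate] at *
    exact ih v n

lemma forall₂_le_mem_left : ∀ {g h : List ℕ}, List.Forall₂ (· ≤ ·) g h →
    ∀ x ∈ g, ∃ y ∈ h, x ≤ y := by
  intro g h hf
  induction hf with
  | nil => simp
  | @cons a b g' h' hab hrest ih =>
    intro x hx
    rcases List.mem_cons.mp hx with rfl | hx
    · exact ⟨b, by simp, hab⟩
    · obtain ⟨y, hy, hxy⟩ := ih x hx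
      exact ⟨y, by simp [hy], hxy⟩

open Classical in
lemma sum_common (n : ℕ) : ∀ (g h : List ℕ), g.length = h.length →
    (∑ i ∈ Finset.range h.length,
      if ((i + 1 = g.length ∧ g.getD i 0 < n) ∨
            (i + 1 < g.length ∧ g.getD i 0 < g.getD (i+1) 0)) ∧
          ((i + 1 = h.length ∧ h.getD i 0 < n) ∨
            (i + 1 < h.length ∧ h.getD i 0 < h.getD (i+1) 0)) ∧
          g.getD i 0 = h.getD i 0 then 1 else 0) = ccN g h n := by
  intro g
  induction g with
  | nil =>
    intro h hlen
    cases h with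
    | nil => simp [ccN_nil_left]
    | cons a h => simp at hlen
  | cons v g ih =>
    intro hh hlen
    cases hh with
    | nil => simp at hlen
    | cons a h =>
      simp only [List.length_cons] at hlen ⊢
      rw [Finset.sum_range_succ']
      have hstep : ∀ i ∈ Finset.range h.length,
          (if ((i + 1 + 1 = g.length + 1 ∧ (v::g).getD (i+1) 0 < n) ∨
                (i + 1 + 1 < g.length + 1 ∧ (v::g).getD (i+1) 0 < (v::g).getD (i+1+1) 0)) ∧
              ((i + 1 + 1 = h.length + 1 ∧ (a::h).getD (i+1) 0 < n) ∨
                (i + 1 + 1 < h.length + 1 ∧ (a::h).getD (i+1) 0 < (a::h).getD (i+1+1) 0)) ∧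
              (v::g).getD (i+1) 0 = (a::h).getD (i+1) 0 then 1 else 0) =
          (if ((i + 1 = g.length ∧ g.getD i 0 < n) ∨
                (i + 1 < g.length ∧ g.getD i 0 < g.getD (i+1) 0)) ∧
              ((i + 1 = h.length ∧ h.getD i 0 < n) ∨
                (i + 1 < h.length ∧ h.getD i 0 < h.getD (i+1) 0)) ∧
              g.getD i 0 = h.getD i 0 then 1 else 0) := by
        intro i _
        refine if_congr ?_ rfl rfl
        simp only [List.getD_cons_succ]
        omega
      rw [Finset.sum_congr rfl hstep, ih h (by omega)]
      have hzero :
          (if ((0 + 1 = g.length + 1 ∧ (v::g).getD 0 0 < n) ∨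
                (0 + 1 < g.length + 1 ∧ (v::g).getD 0 0 < (v::g).getD 1 0)) ∧
              ((0 + 1 = h.length + 1 ∧ (a::h).getD 0 0 < n) ∨
                (0 + 1 < h.length + 1 ∧ (a::h).getD 0 0 < (a::h).getD 1 0)) ∧
              (v::g).getD 0 0 = (a::h).getD 0 0 then 1 else 0) =
          (if v = a ∧ a < h.headD n ∧ v < g.headD n then 1 else 0) := by
        refine if_congr ?_ rfl rfl
        cases h with
        | nil =>
          cases g with
          | nil => simp; omega
          | cons w g' => simp at hlen
        | cons b h' =>
          cases g with
          | nil => simp at hlen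
          | cons w g' =>
            simp only [List.getD_cons_succ, List.getD_cons_zero, List.headD_cons,
              List.length_cons]
            omega
      rw [hzero]
      show _ = ccN (v :: g) (a :: h) n
      rw [ccN]
      omega

open Classical in
lemma cc_eq (p P : List Bool) (hn : countN p = countN P)
    (hlen : (heights p).length = (heights P).length) :
    cc p P = ccN (heights p) (heights P) (countN P) := by
  have hset : {i : ℕ | CommonCorner P p i} =
      ↑((Finset.range (heights P).length).filter (fun i => CommonCorner P p i)) := by
    ext i
    simp only [Finset.coe_filter, Finset.mem_range, Set.mem_setOf_eq]
    constructor
    · intro hi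
      refine ⟨?_, hi⟩
      rcases hi.2.1 with ⟨h1, -⟩ | ⟨h1, -⟩ <;> omega
    · exact fun hi => hi.2
  rw [cc, hset, Set.ncard_coe_finset, Finset.card_filter]
  rw [← sum_common (countN P) (heights p) (heights P) hlen]
  refine Finset.sum_congr rfl fun i _ => ?_
  refine if_congr ?_ rfl rfl
  show PathCorner p i ∧ PathCorner P i ∧ _ ↔ _
  rw [PathCorner, PathCorner, hn]

end Aux

/-- For a lattice path `P` beginning and ending with a corner (an East step
followed by a North step), the number of lattice paths weakly below `P`
equals the sum over the paths `P'` weakly below `P` of the number of corners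
`P'` and `P` have in common. -/
theorem paths_below_eq_sum_common_corners (P : List Bool)
    (hstart : P.take 2 = [false, true]) (hend : P.reverse.take 2 = [true, false])
    (S : Finset (List Bool)) (hS : ∀ p, p ∈ S ↔ WeaklyBelow p P) :
    S.card = ∑ p ∈ S, cc p P := by
  classical
  -- P starts with an East then a North step
  obtain ⟨rest, rfl⟩ : ∃ rest, P = false :: true :: rest := by
    rcases P with _ | ⟨b, _ | ⟨b', rest⟩⟩
    · simp at hstart
    · simp at hstart
    · simp at hstart
      exact ⟨rest, by rw [hstart.1, hstart.2]⟩
  set P : List Bool := false :: true :: rest with hP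
  set n : ℕ := countN P with hn
  set h : List ℕ := heights P with hh
  have hcons : h = 0 :: heightsAux rest 1 := by
    rw [hh, hP]; simp [heights, heightsAux]
  -- every height is strictly below n
  have hlt : ∀ x ∈ h, x < n := by
    obtain ⟨s, hs⟩ : ∃ s, P = s ++ [true] := by
      rcases hr : P.reverse with _ | ⟨b, t⟩
      · exfalso; apply_fun List.length at hr; simp [hP] at hr
      · rw [hr] at hend
        rcases t with _ | ⟨b', t'⟩
        · exfalso; apply_fun List.length at hr; simp [hP] at hr
        · simp at hend
          refine ⟨(b' :: t').reverse, ?_⟩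
          have := congrArg List.reverse hr
          simp at this
          rw [this, hend.1]
          simp
    intro x hx
    rw [hh, heights, hs, heightsAux_append_true] at hx
    have hle := mem_heightsAux_le s 0 x hx
    rw [hn, hs]
    simp only [countN, List.count_append] at *
    simp [List.count_cons] at *
    omega
  have hne : h ≠ [] := by rw [hcons]; simp
  -- heights of elements of S are exactly `below 0 h`
  have hmemS : ∀ p ∈ S, heights p ∈ below 0 h := by
    intro p hp
    exact (mem_below 0 h (heights p)).mpr ⟨chain_heightsAux p 0, ((hS p).mp hp).2.2⟩
  have hcountNS : ∀ p ∈ S, countN p = n := fun p hp => ((hS p).mp hp).2.1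
  have hrecon : ∀ p : List Bool, ofH (heights p) 0 (countN p) = p := by
    intro p
    have := ofH_heightsAux p 0
    simpa [heights] using this
  have hinj : ∀ p₁ (h₁ : p₁ ∈ S), ∀ p₂ (h₂ : p₂ ∈ S),
      heights p₁ = heights p₂ → p₁ = p₂ := by
    intro p₁ h₁ p₂ h₂ heq
    rw [← hrecon p₁, ← hrecon p₂, heq, hcountNS p₁ h₁, hcountNS p₂ h₂]
  have hsurj : ∀ g ∈ (below 0 h).toFinset, ∃ p, ∃ (hp : p ∈ S), heights p = g := by
    intro g hg
    rw [List.mem_toFinset] at hg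
    obtain ⟨hch, hf₂⟩ := (mem_below 0 h g).mp hg
    have hgle : ∀ x ∈ g, x ≤ n := by
      intro x hx
      obtain ⟨y, hy, hxy⟩ := forall₂_le_mem_left hf₂ x hx
      exact le_of_lt (lt_of_le_of_lt hxy (hlt y hy))
    have hgh : heights (ofH g 0 n) = g := by
      rw [heights, heightsAux_ofH g 0 n hch]
    have hgN : countN (ofH g 0 n) = n := by
      rw [countN_ofH g 0 n hch hgle (Nat.zero_le n)]
      omega
    refine ⟨ofH g 0 n, ?_, hgh⟩
    rw [hS]
    refine ⟨?_, by rw [hgN, hn], by rw [hgh, ← hh]; exact hf₂⟩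
    rw [countE_ofH g 0 n, List.Forall₂.length_eq hf₂, hh, heights, heightsAux_length P 0]
  -- transfer cardinality and sum through the bijection
  have hcard : S.card = (below 0 h).toFinset.card :=
    Finset.card_bij (fun p _ => heights p)
      (fun p hp => List.mem_toFinset.mpr (hmemS p hp)) hinj hsurj
  have hsum : ∑ p ∈ S, cc p P = ∑ g ∈ (below 0 h).toFinset, ccN g h n := by
    refine Finset.sum_bij (fun p _ => heights p)
      (fun p hp => List.mem_toFinset.mpr (hmemS p hp)) hinj hsurj ?_
    intro p hp
    have hl : (heights p).length = (heights P).length :=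
      List.Forall₂.length_eq ((hS p).mp hp).2.2
    rw [cc_eq p P (hcountNS p hp) hl]
  rw [hsum, hcard]
  have hnodup := nodup_below 0 h
  rw [List.sum_toFinset _ hnodup, List.toFinset_card_of_nodup hnodup]
  rw [key n 0 h (fun he => absurd he hne) hlt]
  symm
  rw [List.countP_eq_length]
  intro g hg
  obtain ⟨hch, hf₂⟩ := (mem_below 0 h g).mp hg
  rw [hcons] at hf₂
  rcases List.forall₂_cons_right_iff.mp hf₂ with ⟨v, g', hv0, -, rfl⟩
  simp only [List.headD_cons, decide_eq_true_eq]
  exact decide_eq_true (by omega)
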